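/- Let K ⊆ ℝⁿ be a convex set and x : [0, T] → K an absolutely continuous path. Then for almost every t, the derivative x'(t) lies in the orthogonal complement of the normal cone N_K(x(t)); that is, ⟨y, x'(t)⟩ = 0 for every y ∈ N_K(x(t)). -/

import Mathlib

open MeasureTheory

/-- If `x : [0,T] → K` is an absolutely continuous path in a convex set `K ⊆ ℝⁿ`,
then for almost every `t` the derivative `x'(t)` is orthogonal to the normal cone
`N_K(x(t))`. -/
theorem stmt_2 (n : ℕ) (T : ℝ) (hT : 0 < T)
    (K : Set (EuclideanSpace ℝ (Fin n))) (hK : Convex ℝ K)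
    (x x' : ℝ → EuclideanSpace ℝ (Fin n))
    (hmem : ∀ t ∈ Set.Icc (0 : ℝ) T, x t ∈ K)
    (hint : ∀ t ∈ Set.Icc (0 : ℝ) T, IntervalIntegrable x' volume 0 t)
    (hAC : ∀ t ∈ Set.Icc (0 : ℝ) T, x t = x 0 + ∫ s in (0 : ℝ)..t, x' s)
    (hderiv : ∀ᵐ t ∂(volume.restrict (Set.Icc (0 : ℝ) T)), HasDerivAt x (x' t) t) :
    ∀ᵐ t ∂(volume.restrict (Set.Icc (0 : ℝ) T)),
      ∀ y : EuclideanSpace ℝ (Fin n),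
        (∀ z ∈ K, inner ℝ y (z - x t) ≤ (0 : ℝ)) → inner ℝ y (x' t) = (0 : ℝ) := by
  have hIcc : ∀ᵐ t ∂(volume.restrict (Set.Icc (0 : ℝ) T)), t ∈ Set.Icc (0 : ℝ) T :=
    ae_restrict_mem measurableSet_Icc
  have hends : ∀ᵐ t ∂(volume.restrict (Set.Icc (0 : ℝ) T)), t ∉ ({0, T} : Set ℝ) := by
    refine (ae_restrict_of_ae ?_)
    have : volume ({0, T} : Set ℝ) = 0 :=
      measure_union_null Real.volume_singleton Real.volume_singleton
    exact (MeasureTheory.measure_eq_zero_iff_ae_notMem.mp this)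
  filter_upwards [hderiv, hIcc, hends] with t hd ht hnt y hy
  have htIoo : t ∈ Set.Ioo (0 : ℝ) T := by
    rcases ht with ⟨h0, h1⟩
    constructor
    · rcases lt_or_eq_of_le h0 with h | h
      · exact h
      · exact absurd (Or.inl h.symm) hnt
    · rcases lt_or_eq_of_le h1 with h | h
      · exact h
      · exact absurd (Or.inr h) hnt
  -- g s = ⟪y, x s⟫
  set g : ℝ → ℝ := fun s => inner ℝ y (x s) with hg
  have hgd : HasDerivAt g (inner ℝ y (x' t)) t := by
    have := (innerSL ℝ y).hasFDerivAt.comp_hasDerivAt t hd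
    exact this
  have hmax : IsLocalMax g t := by
    have hnhds : Set.Icc (0 : ℝ) T ∈ nhds t :=
      mem_nhds_iff.mpr ⟨Set.Ioo 0 T, Set.Ioo_subset_Icc_self, isOpen_Ioo, htIoo⟩
    filter_upwards [hnhds] with s hs
    have := hy (x s) (hmem s hs)
    have h2 : inner ℝ y (x s - x t) = g s - g t := by
      simp [hg, inner_sub_right]
    linarith [h2 ▸ this]
  exact hmax.hasDerivAt_eq_zero hgd
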